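/- Let A be a noetherian commutative ring graded by an abelian group ι, and let P be a homogeneous ideal of A. Then P is G-prime (i.e., P = 𝔭* for some prime ideal 𝔭 of A) if and only if P ≠ A and for all homogeneous ideals I, J of A with I·J ⊆ P, either I ⊆ P or J ⊆ P. -/

import Mathlib

/-- A homogeneous ideal `P` of a graded ring `A` is `G`-prime if `P = 𝔭*`
(the homogeneous core, i.e. the largest homogeneous ideal contained in `𝔭`)
for some prime ideal `𝔭` of `A`. -/
def Ideal.IsGPrime {ι : Type*} [AddCommGroup ι] [DecidableEq ι] {A : Type*} [CommRing A]
    (𝒜 : ι → AddSubgroup A) [GradedRing 𝒜] (P : Ideal A) : Prop :=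
  ∃ 𝔭 : Ideal A, 𝔭.IsPrime ∧ P = (𝔭.homogeneousCore 𝒜).toIdeal


private lemma le_core_aux {ι : Type*} [AddCommGroup ι] [DecidableEq ι] {A : Type*} [CommRing A]
    (𝒜 : ι → AddSubgroup A) [GradedRing 𝒜] {I J : Ideal A} (hI : I.IsHomogeneous 𝒜)
    (h : I ≤ J) : I ≤ (J.homogeneousCore 𝒜).toIdeal := by
  conv_lhs => rw [← hI.toIdeal_homogeneousCore_eq_self]
  exact Ideal.homogeneousCore'_mono 𝒜 h

/-- A homogeneous ideal `P` of a noetherian graded ring is `G`-prime if and only if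
`P ≠ A` and for all homogeneous ideals `I`, `J` with `I·J ⊆ P`, either `I ⊆ P` or `J ⊆ P`. -/
theorem Ideal.isGPrime_iff {ι : Type*} [AddCommGroup ι] [DecidableEq ι] {A : Type*} [CommRing A]
    [IsNoetherianRing A] (𝒜 : ι → AddSubgroup A) [GradedRing 𝒜]
    (P : Ideal A) (hP : P.IsHomogeneous 𝒜) :
    P.IsGPrime 𝒜 ↔
      P ≠ ⊤ ∧ ∀ I J : Ideal A, I.IsHomogeneous 𝒜 → J.IsHomogeneous 𝒜 →
        I * J ≤ P → I ≤ P ∨ J ≤ P := by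
  constructor
  · rintro ⟨𝔭, h𝔭, rfl⟩
    constructor
    · intro h
      exact h𝔭.ne_top (top_le_iff.mp (h ▸ Ideal.toIdeal_homogeneousCore_le 𝒜 𝔭))
    · intro I J hI hJ hIJ
      have hIJ' : I * J ≤ 𝔭 := hIJ.trans (Ideal.toIdeal_homogeneousCore_le 𝒜 𝔭)
      rcases (Ideal.IsPrime.mul_le h𝔭).mp hIJ' with h | h
      · exact Or.inl (le_core_aux 𝒜 hI h)
      · exact Or.inr (le_core_aux 𝒜 hJ h)
  · rintro ⟨hne, hprime⟩
    -- take a maximal element of the set of ideals containing P whose core is ≤ P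
    set S : Set (Ideal A) := {I | P ≤ I ∧ (I.homogeneousCore 𝒜).toIdeal ≤ P} with hS
    have hPS : P ∈ S := ⟨le_rfl, le_of_eq (hP.toIdeal_homogeneousCore_eq_self)⟩
    obtain ⟨𝔭, h𝔭S, hmax⟩ :=
      (IsWellFounded.wf (r := ((· > ·) : Ideal A → Ideal A → Prop))).has_min S ⟨P, hPS⟩
    have hcore : (𝔭.homogeneousCore 𝒜).toIdeal = P := by
      refine le_antisymm h𝔭S.2 ?_
      exact le_core_aux 𝒜 hP h𝔭S.1
    have hne𝔭 : 𝔭 ≠ ⊤ := by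
      rintro rfl
      exact hne (top_le_iff.mp (by
        rw [← hcore, Ideal.IsHomogeneous.toIdeal_homogeneousCore_eq_self]
        exact Ideal.IsHomogeneous.top 𝒜))
    refine ⟨𝔭, ⟨hne𝔭, ?_⟩, hcore.symm⟩
    intro a b hab
    by_contra h
    push_neg at h
    obtain ⟨ha, hb⟩ := h
    have key : ∀ x : A, x ∉ 𝔭 → ¬ ((𝔭 ⊔ Ideal.span {x}).homogeneousCore 𝒜).toIdeal ≤ P := by
      intro x hx hle
      refine hmax (𝔭 ⊔ Ideal.span {x}) ⟨h𝔭S.1.trans le_sup_left, hle⟩ ?_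
      exact lt_of_le_of_ne le_sup_left (fun he =>
        hx (he ▸ Ideal.mem_sup_right (Ideal.mem_span_singleton_self x)))
    have hIa := key a ha
    have hIb := key b hb
    have hmul : ((𝔭 ⊔ Ideal.span {a}).homogeneousCore 𝒜).toIdeal *
        ((𝔭 ⊔ Ideal.span {b}).homogeneousCore 𝒜).toIdeal ≤ P := by
      have h1 : (𝔭 ⊔ Ideal.span {a}) * (𝔭 ⊔ Ideal.span {b}) ≤ 𝔭 := by
        rw [mul_sup, sup_mul, sup_mul]
        refine sup_le (sup_le Ideal.mul_le_left Ideal.mul_le_right)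
          (sup_le Ideal.mul_le_left ?_)
        rw [Ideal.span_singleton_mul_span_singleton]
        rwa [Ideal.span_le, Set.singleton_subset_iff, SetLike.mem_coe]
      have h2 : ((𝔭 ⊔ Ideal.span {a}).homogeneousCore 𝒜).toIdeal *
          ((𝔭 ⊔ Ideal.span {b}).homogeneousCore 𝒜).toIdeal ≤ 𝔭 :=
        (Ideal.mul_mono (Ideal.toIdeal_homogeneousCore_le 𝒜 _)
          (Ideal.toIdeal_homogeneousCore_le 𝒜 _)).trans h1
      have h3 := le_core_aux 𝒜 (Ideal.IsHomogeneous.mul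
        ((𝔭 ⊔ Ideal.span {a}).homogeneousCore 𝒜).isHomogeneous
        ((𝔭 ⊔ Ideal.span {b}).homogeneousCore 𝒜).isHomogeneous) h2
      exact h3.trans hcore.le
    rcases hprime _ _ ((𝔭 ⊔ Ideal.span {a}).homogeneousCore 𝒜).isHomogeneous
      ((𝔭 ⊔ Ideal.span {b}).homogeneousCore 𝒜).isHomogeneous hmul with h | h
    · exact hIa h
    · exact hIb h
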